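/- Let φ: X → ℝ^d with A = E[φ(x)φ(x)^T] = U Λ U^T, and define ξ(x) = U^T φ(x). If P(x,x')/(P(x)P(x')) = ⟨φ(x), φ(x')⟩, then the eigenfunction fixed-point equation holds: ∫ T(x,x') √(P(x')) ξ(x') dx' = Λ √(P(x)) ξ(x), where T(x,x') = P(x,x')/√(P(x)P(x')). -/

import Mathlib

open MeasureTheory Matrix

/-- With `A = E_{P(x)}[φ(x)φ(x)ᵀ] = U Λ Uᵀ` and `ξ(x) = Uᵀ φ(x)`, if
`P(x,x')/(P(x)P(x')) = ⟨φ(x),φ(x')⟩` then the eigenfunction fixed-point equation holds: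
`∫ T(x,x') √(P(x')) ξ(x') dx' = Λ √(P(x)) ξ(x)`, where
`T(x,x') = P(x,x')/√(P(x)P(x'))`. -/
theorem stmt6
    {X : Type*} [MeasurableSpace X]
    (μ : Measure X)                  -- base measure
    (d : ℕ) (φ : X → Fin d → ℝ)
    (p : X → ℝ)                      -- the (common) marginal density P(x)
    (Pj : X → X → ℝ)                 -- joint density P(x,x')
    (hp : ∀ x, 0 < p x)
    (hPMI : ∀ x x', Pj x x' / (p x * p x') = φ x ⬝ᵥ φ x')
    (U Λ : Matrix (Fin d) (Fin d) ℝ)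
    (hU : Uᵀ * U = 1)
    (hA : ∀ i j : Fin d, (∫ x, φ x i * φ x j * p x ∂μ) = (U * Λ * Uᵀ) i j)
    (ξ : X → Fin d → ℝ)
    (hξ : ∀ x, ξ x = Uᵀ.mulVec (φ x))
    (T : X → X → ℝ)
    (hT : ∀ x x', T x x' = Pj x x' / Real.sqrt (p x * p x'))
    (hInt : ∀ (x : X) (i : Fin d),
      Integrable (fun x' => T x x' * Real.sqrt (p x') * ξ x' i) μ) :
    ∀ (x : X) (i : Fin d),
      (∫ x', T x x' * Real.sqrt (p x') * ξ x' i ∂μ) =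
        (Λ.mulVec (ξ x)) i * Real.sqrt (p x) := by
  -- basic facts
  have hUUT : U * Uᵀ = 1 := mul_eq_one_comm.mp hU
  have hPj : ∀ x x', Pj x x' = (φ x ⬝ᵥ φ x') * (p x * p x') := by
    intro x x'
    exact (div_eq_iff (ne_of_gt (mul_pos (hp x) (hp x')))).mp (hPMI x x')
  have hTkey : ∀ x x', T x x' * Real.sqrt (p x') =
      Real.sqrt (p x) * ((φ x ⬝ᵥ φ x') * p x') := by
    intro x x'
    have hx := (hp x).le
    have hx' := (hp x').le
    have sx : Real.sqrt (p x) ≠ 0 := ne_of_gt (Real.sqrt_pos.mpr (hp x))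
    have sx' : Real.sqrt (p x') ≠ 0 := ne_of_gt (Real.sqrt_pos.mpr (hp x'))
    have hpx : p x = Real.sqrt (p x) * Real.sqrt (p x) := (Real.mul_self_sqrt hx).symm
    have hpx' : p x' = Real.sqrt (p x') * Real.sqrt (p x') := (Real.mul_self_sqrt hx').symm
    have e1 : Real.sqrt (p x) * Real.sqrt (p x) = p x := Real.mul_self_sqrt hx
    rw [hT, hPj, Real.sqrt_mul hx]
    field_simp
    linear_combination (-(φ x ⬝ᵥ φ x' * p x')) * e1
  have hsumU : ∀ x' (k : Fin d), ∑ i, U k i * ξ x' i = φ x' k := by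
    intro x' k
    have : ∑ i, U k i * ξ x' i = (U.mulVec (ξ x')) k := by
      simp [Matrix.mulVec, dotProduct]
    rw [this, hξ, Matrix.mulVec_mulVec, hUUT, Matrix.one_mulVec]
  -- Step A: integrability of (φ x ⬝ᵥ φ x') * φ x' k * p x'
  have hg : ∀ x (k : Fin d),
      Integrable (fun x' => (φ x ⬝ᵥ φ x') * φ x' k * p x') μ := by
    intro x k
    have sx : Real.sqrt (p x) ≠ 0 := ne_of_gt (Real.sqrt_pos.mpr (hp x))
    have h0 : ∀ i : Fin d,
        Integrable (fun x' => (φ x ⬝ᵥ φ x') * p x' * ξ x' i) μ := by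
      intro i
      have h2 : (fun x' => (φ x ⬝ᵥ φ x') * p x' * ξ x' i) =
          fun x' => (Real.sqrt (p x))⁻¹ * (T x x' * Real.sqrt (p x') * ξ x' i) := by
        funext x'
        rw [hTkey x x']
        field_simp
      rw [h2]
      exact (hInt x i).const_mul _
    have hsum : ∀ x', ∑ i, U k i * ((φ x ⬝ᵥ φ x') * p x' * ξ x' i) =
        (φ x ⬝ᵥ φ x') * φ x' k * p x' := by
      intro x'
      have h1 : ∑ i, U k i * ((φ x ⬝ᵥ φ x') * p x' * ξ x' i) =
          ((φ x ⬝ᵥ φ x') * p x') * ∑ i, U k i * ξ x' i := by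
        rw [Finset.mul_sum]
        exact Finset.sum_congr rfl fun i _ => by ring
      rw [h1, hsumU x' k]; ring
    have hint2 : Integrable
        (fun x' => ∑ i, U k i * ((φ x ⬝ᵥ φ x') * p x' * ξ x' i)) μ :=
      integrable_finset_sum _ fun i _ => (h0 i).const_mul _
    exact hint2.congr (Filter.Eventually.of_forall hsum)
  -- Step B/C: integrability of φ x' j * φ x' k * p x' via span and projection
  set ψ : X → EuclideanSpace ℝ (Fin d) :=
      fun x => (WithLp.equiv 2 (Fin d → ℝ)).symm (φ x) with hψ
  have hinner : ∀ (v : EuclideanSpace ℝ (Fin d)) x',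
      (inner ℝ v (ψ x') : ℝ) = ∑ k, v k * φ x' k := by
    intro v x'
    simp only [PiLp.inner_apply, RCLike.inner_apply, conj_trivial]
    exact Finset.sum_congr rfl fun k _ => mul_comm _ _
  set V : Submodule ℝ (EuclideanSpace ℝ (Fin d)) :=
      Submodule.span ℝ (Set.range ψ) with hV
  have hφmem : ∀ x', ψ x' ∈ V := fun x' => Submodule.subset_span ⟨x', rfl⟩
  have hspan : ∀ (v : EuclideanSpace ℝ (Fin d)), v ∈ V → ∀ k : Fin d,
      Integrable (fun x' => (inner ℝ v (ψ x') : ℝ) * φ x' k * p x') μ := by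
    intro v hv k
    induction hv using Submodule.span_induction with
    | mem w hw =>
      obtain ⟨x, rfl⟩ := hw
      have heq : ∀ x', (inner ℝ (ψ x) (ψ x') : ℝ) = φ x ⬝ᵥ φ x' := by
        intro x'; rw [hinner]; rfl
      exact (hg x k).congr (Filter.Eventually.of_forall fun x' => by simp only [heq])
    | zero =>
      simp only [inner_zero_left, zero_mul]
      exact integrable_zero _ _ _
    | add a b ha hb iha ihb =>
      simp only [inner_add_left, add_mul]
      exact iha.add ihb
    | smul c a ha iha =>
      refine (iha.const_mul c).congr (Filter.Eventually.of_forall fun x' => ?_)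
      simp only [real_inner_smul_left]
      ring
  have h3 : ∀ j k : Fin d, Integrable (fun x' => φ x' j * φ x' k * p x') μ := by
    intro j k
    set e : EuclideanSpace ℝ (Fin d) := EuclideanSpace.single j (1 : ℝ) with he
    set u : EuclideanSpace ℝ (Fin d) := (V.orthogonalProjectionOnto e : EuclideanSpace ℝ (Fin d))
      with hu
    have huv : ∀ x', (inner ℝ u (ψ x') : ℝ) = φ x' j := by
      intro x'
      have h0 : (inner ℝ (e - u) (ψ x') : ℝ) = 0 :=
        V.starProjection_inner_eq_zero e (ψ x') (hφmem x')
      rw [inner_sub_left] at h0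
      have hej : (inner ℝ e (ψ x') : ℝ) = φ x' j := by
        rw [hinner]
        simp [he, EuclideanSpace.single_apply]
      linarith [hej, h0]
    have key : (fun x' => φ x' j * φ x' k * p x') =
        fun x' => (inner ℝ u (ψ x') : ℝ) * φ x' k * p x' := by
      funext x'; rw [huv]
    rw [key]
    exact hspan u (V.orthogonalProjectionOnto e).2 k
  -- symmetry of Λ
  have hMs : (U * Λ * Uᵀ)ᵀ = U * Λ * Uᵀ := by
    ext i j
    rw [Matrix.transpose_apply, ← hA j i, ← hA i j]
    exact integral_congr_ae (Filter.Eventually.of_forall fun y => by ring)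
  have hΛs : Λᵀ = Λ := by
    have h1 : Λ = Uᵀ * (U * Λ * Uᵀ) * U := by
      calc Λ = (Uᵀ * U) * Λ * (Uᵀ * U) := by rw [hU, one_mul, mul_one]
        _ = Uᵀ * (U * Λ * Uᵀ) * U := by noncomm_ring
    calc Λᵀ = (Uᵀ * (U * Λ * Uᵀ) * U)ᵀ := by rw [← h1]
      _ = Uᵀ * (U * Λ * Uᵀ)ᵀ * U := by
          simp [Matrix.transpose_mul, Matrix.mul_assoc]
      _ = Uᵀ * (U * Λ * Uᵀ) * U := by rw [hMs]
      _ = Λ := h1.symm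
  -- main computation
  intro x i
  have hrE : ∀ x', T x x' * Real.sqrt (p x') * ξ x' i =
      Real.sqrt (p x) * ((φ x ⬝ᵥ φ x') * p x' * ξ x' i) := by
    intro x'
    rw [hTkey x x']; ring
  have hexpand : ∀ x', (φ x ⬝ᵥ φ x') * p x' * ξ x' i =
      ∑ j, ∑ k, (φ x j * U k i) * (φ x' j * φ x' k * p x') := by
    intro x'
    rw [hξ]
    simp only [Matrix.mulVec, dotProduct, Matrix.transpose_apply]
    simp only [Finset.sum_mul, Finset.mul_sum]
    rw [Finset.sum_comm]
    exact Finset.sum_congr rfl fun j _ => Finset.sum_congr rfl fun k _ => by ring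
  have hMU : (U * Λ * Uᵀ) * U = U * Λ := by
    rw [Matrix.mul_assoc (U * Λ) Uᵀ U, hU, Matrix.mul_one]
  have halg : ∑ j, ∑ k, (φ x j * U k i) * ((U * Λ * Uᵀ) j k) = (Λ.mulVec (ξ x)) i := by
    rw [hξ]
    calc ∑ j, ∑ k, (φ x j * U k i) * ((U * Λ * Uᵀ) j k)
        = ∑ j, φ x j * (((U * Λ * Uᵀ) * U) j i) := by
          refine Finset.sum_congr rfl fun j _ => ?_
          rw [Matrix.mul_apply, Finset.mul_sum]
          exact Finset.sum_congr rfl fun k _ => by ring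
      _ = ∑ j, φ x j * ((U * Λ) j i) := by rw [hMU]
      _ = (((U * Λ)ᵀ).mulVec (φ x)) i := by
          simp only [Matrix.mulVec, dotProduct, Matrix.transpose_apply]
          exact Finset.sum_congr rfl fun j _ => mul_comm _ _
      _ = ((Λ * Uᵀ).mulVec (φ x)) i := by rw [Matrix.transpose_mul, hΛs]
      _ = (Λ.mulVec (Uᵀ.mulVec (φ x))) i := by rw [Matrix.mulVec_mulVec]
  calc (∫ x', T x x' * Real.sqrt (p x') * ξ x' i ∂μ)
      = ∫ x', Real.sqrt (p x) * ((φ x ⬝ᵥ φ x') * p x' * ξ x' i) ∂μ :=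
        integral_congr_ae (Filter.Eventually.of_forall hrE)
    _ = Real.sqrt (p x) * ∫ x', (φ x ⬝ᵥ φ x') * p x' * ξ x' i ∂μ :=
        integral_const_mul _ _
    _ = Real.sqrt (p x) *
        ∫ x', ∑ j, ∑ k, (φ x j * U k i) * (φ x' j * φ x' k * p x') ∂μ := by
        rw [integral_congr_ae (Filter.Eventually.of_forall hexpand)]
    _ = Real.sqrt (p x) *
        ∑ j, ∑ k, (φ x j * U k i) * ∫ x', φ x' j * φ x' k * p x' ∂μ := by
        rw [integral_finset_sum _ fun j _ =>
          integrable_finset_sum _ fun k _ => (h3 j k).const_mul _]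
        congr 1
        refine Finset.sum_congr rfl fun j _ => ?_
        rw [integral_finset_sum _ fun k _ => (h3 j k).const_mul _]
        exact Finset.sum_congr rfl fun k _ => integral_const_mul _ _
    _ = Real.sqrt (p x) * ∑ j, ∑ k, (φ x j * U k i) * ((U * Λ * Uᵀ) j k) := by
        simp_rw [hA]
    _ = (Λ.mulVec (ξ x)) i * Real.sqrt (p x) := by rw [halg]; ring
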